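/- Let n ≥ 5 be an integer and x ≥ 0 a real number. Then the third central moment of the second-order modified Baskakov–Durrmeyer operator satisfies V̂_{n,2}((t−x)³; x) = (1/((n−2)(n−3)(n−4)))·[n(−12x − 36x² − 24x³) − 21 − 150x − 324x² − 216x³], where the operator is applied to the function t ↦ (t − x)³. -/

import Mathlib

open MeasureTheory Filter Topology

set_option maxHeartbeats 1000000

/-- Baskakov basis function `p_{n,k}(x) = C(n+k-1, k) x^k / (1+x)^{n+k}`. -/
noncomputable def bask (n k : ℕ) (x : ℝ) : ℝ :=
  (Nat.choose (n + k - 1) k : ℝ) * x ^ k / (1 + x) ^ (n + k)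

/-- Second-order modified basis
`p^2_{n,k}(x) = (3/2 + 2x - n x(1+x)) p_{n+2,k}(x) + 2n x(1+x) p_{n+2,k-1}(x)
  + (-1/2 - 2x - n x(1+x)) p_{n+2,k-2}(x)`, with `p_{n+2,j} = 0` for `j < 0`. -/
noncomputable def p2 (n k : ℕ) (x : ℝ) : ℝ :=
  (3 / 2 + 2 * x - (n : ℝ) * x * (1 + x)) * bask (n + 2) k x
    + 2 * (n : ℝ) * x * (1 + x) * (if k = 0 then 0 else bask (n + 2) (k - 1) x)
    + (-(1 / 2) - 2 * x - (n : ℝ) * x * (1 + x)) * (if k < 2 then 0 else bask (n + 2) (k - 2) x)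

/-- Second-order modified Baskakov–Durrmeyer operator. -/
noncomputable def V2 (n : ℕ) (f : ℝ → ℝ) (x : ℝ) : ℝ :=
  ((n : ℝ) - 1) * ∑' k : ℕ, p2 n k x * ∫ t in Set.Ioi (0 : ℝ), bask n k t * f t


section Aux

open Set


lemma tendsto_one_add_inv : Tendsto (fun t : ℝ => (1 + t)⁻¹) atTop (𝓝 0) :=
  tendsto_inv_atTop_zero.comp (tendsto_atTop_add_const_left _ 1 tendsto_id)

lemma intOn (a b : ℕ) (h : a + 2 ≤ b) :
    IntegrableOn (fun t : ℝ => t ^ a / (1 + t) ^ b) (Set.Ioi 0) := by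
  have base : IntegrableOn (fun t : ℝ => ((1 + t) ^ 2)⁻¹) (Set.Ioi 0) := by
    have hderiv : ∀ t ∈ Ici (0:ℝ), HasDerivAt (fun t : ℝ => -(1 + t)⁻¹) (((1 + t) ^ 2)⁻¹) t := by
      intro t ht
      simp only [mem_Ici] at ht
      have h1 : HasDerivAt (fun t : ℝ => 1 + t) 1 t := (hasDerivAt_id t).const_add 1
      have hne : (1 : ℝ) + t ≠ 0 := by positivity
      have := (h1.inv hne).neg
      refine this.congr_deriv ?_
      ring
    have htend : Tendsto (fun t : ℝ => -(1 + t)⁻¹) atTop (𝓝 0) := by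
      rw [show (0:ℝ) = -0 by norm_num]
      exact tendsto_one_add_inv.neg
    exact integrableOn_Ioi_deriv_of_nonneg' hderiv (fun t ht => by positivity) htend
  refine Integrable.mono base ?_ ?_
  · apply ContinuousOn.aestronglyMeasurable ?_ measurableSet_Ioi
    apply ContinuousOn.div (by fun_prop) (by fun_prop)
    intro t ht
    simp only [mem_Ioi] at ht
    positivity
  · rw [ae_restrict_iff' measurableSet_Ioi]
    filter_upwards with t ht
    simp only [mem_Ioi] at ht
    have h1 : (0:ℝ) < 1 + t := by linarith
    rw [Real.norm_eq_abs, Real.norm_eq_abs, abs_of_nonneg (by positivity),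
      abs_of_nonneg (by positivity), div_le_iff₀ (by positivity)]
    have hb : (1+t) ^ b = (1+t) ^ (b-2) * (1+t) ^ 2 := by rw [← pow_add]; congr 1; omega
    calc t ^ a ≤ (1 + t) ^ a := pow_le_pow_left₀ ht.le (by linarith) a
      _ ≤ (1 + t) ^ (b - 2) := pow_le_pow_right₀ (by linarith) (by omega)
      _ = ((1 + t) ^ 2)⁻¹ * (1 + t) ^ b := by rw [hb]; field_simp

lemma Jval (a c : ℕ) :
    ∫ t in Set.Ioi (0:ℝ), t ^ a / (1 + t) ^ (a + c + 2)
      = (a.factorial * c.factorial : ℝ) / (a + c + 1).factorial := by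
  induction a with
  | zero =>
    have hderiv : ∀ t ∈ Ici (0:ℝ),
        HasDerivAt (fun t : ℝ => -(((1 + t) ^ (c + 1) * (c + 1))⁻¹))
          (t ^ 0 / (1 + t) ^ (0 + c + 2)) t := by
      intro t ht
      simp only [mem_Ici] at ht
      have hne : (1 : ℝ) + t ≠ 0 := by positivity
      have h1 : HasDerivAt (fun t : ℝ => 1 + t) 1 t := (hasDerivAt_id t).const_add 1
      have h2 : HasDerivAt (fun t : ℝ => (1 + t) ^ (c + 1) * ((c:ℝ) + 1))
          (((c+1:ℕ):ℝ) * (1 + t) ^ c * 1 * ((c:ℝ)+1)) t := by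
        have := (h1.pow (c + 1)).mul_const ((c:ℝ)+1)
        simpa using this
      have hne2 : (1 + t) ^ (c + 1) * ((c:ℝ) + 1) ≠ 0 := by positivity
      have := (h2.inv hne2).neg
      refine this.congr_deriv ?_
      push_cast
      field_simp
      ring
    have htend : Tendsto (fun t : ℝ => -(((1 + t) ^ (c + 1) * (c + 1))⁻¹)) atTop (𝓝 0) := by
      rw [show (0:ℝ) = -0 by norm_num]
      apply Tendsto.neg
      apply Tendsto.inv_tendsto_atTop
      apply Tendsto.atTop_mul_const (by positivity : (0:ℝ) < (c:ℝ) + 1)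
      exact (tendsto_pow_atTop (by omega)).comp (tendsto_atTop_add_const_left _ 1 tendsto_id)
    rw [integral_Ioi_of_hasDerivAt_of_tendsto' hderiv (intOn 0 (0 + c + 2) (by omega)) htend]
    simp [Nat.factorial_succ]
    field_simp
  | succ a ih =>
    have key : ∀ t ∈ Ici (0:ℝ),
        HasDerivAt (fun t : ℝ => t ^ (a + 1) / (1 + t) ^ (a + c + 2))
          (((a:ℝ)+1) * (t ^ a / (1 + t) ^ (a + c + 2))
            - ((a:ℝ)+c+2) * (t ^ (a+1) / (1 + t) ^ (a + 1 + c + 2))) t := by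
      intro t ht
      simp only [mem_Ici] at ht
      have hne : (1 : ℝ) + t ≠ 0 := by positivity
      have h1 : HasDerivAt (fun t : ℝ => 1 + t) 1 t := (hasDerivAt_id t).const_add 1
      have hd : HasDerivAt (fun t : ℝ => (1 + t) ^ (a + c + 2))
          (((a+c+2:ℕ):ℝ) * (1 + t) ^ (a + c + 1) * 1) t := by
        simpa using h1.fun_pow (a + c + 2)
      have := (hasDerivAt_pow (a + 1) t).div hd (by positivity)
      refine this.congr_deriv ?_
      push_cast
      field_simp
      ring
    have htend : Tendsto (fun t : ℝ => t ^ (a + 1) / (1 + t) ^ (a + c + 2)) atTop (𝓝 0) := by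
      apply squeeze_zero' (g := fun t : ℝ => (1 + t)⁻¹)
      · filter_upwards [eventually_ge_atTop (0:ℝ)] with t ht
        positivity
      · filter_upwards [eventually_ge_atTop (0:ℝ)] with t ht
        have h1 : (0:ℝ) < 1 + t := by linarith
        rw [div_le_iff₀ (by positivity)]
        have hh : (1+t)⁻¹ * (1+t) ^ (a+c+2) = (1+t) ^ (a+c+1) := by
          rw [show a+c+2 = a+c+1+1 by omega, pow_succ]
          field_simp
        rw [hh]
        calc t ^ (a+1) ≤ (1+t) ^ (a+1) := pow_le_pow_left₀ ht (by linarith) _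
          _ ≤ (1+t) ^ (a+c+1) := pow_le_pow_right₀ (by linarith) (by omega)
      · exact tendsto_one_add_inv
    have hint : IntegrableOn (fun t : ℝ =>
        ((a:ℝ)+1) * (t ^ a / (1 + t) ^ (a + c + 2))
          - ((a:ℝ)+c+2) * (t ^ (a+1) / (1 + t) ^ (a + 1 + c + 2))) (Set.Ioi 0) :=
      ((intOn a (a+c+2) (by omega)).const_mul _).sub
        ((intOn (a+1) (a+1+c+2) (by omega)).const_mul _)
    have h0 := integral_Ioi_of_hasDerivAt_of_tendsto' key hint htend
    simp only [zero_pow (by omega : a + 1 ≠ 0), zero_div] at h0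
    rw [integral_sub ((intOn a (a+c+2) (by omega)).const_mul _)
        ((intOn (a+1) (a+1+c+2) (by omega)).const_mul _),
      integral_const_mul, integral_const_mul, ih] at h0
    have h2 : ((a:ℝ)+c+2) * ∫ t in Set.Ioi (0:ℝ), t ^ (a+1) / (1 + t) ^ (a + 1 + c + 2)
        = ((a:ℝ)+1) * ((a.factorial * c.factorial : ℝ) / (a + c + 1).factorial) := by
      linarith
    rw [eq_div_iff (by positivity : ((a+1+c+1).factorial:ℝ) ≠ 0),
      show a+1+c+1 = a+c+1+1 by omega]
    rw [Nat.factorial_succ (a+c+1), Nat.factorial_succ a]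
    push_cast
    field_simp at h2
    linear_combination h2

lemma integral_E (m k : ℕ) (x : ℝ) :
    ∫ t in Set.Ioi (0:ℝ), bask (m+5) k t * (t - x) ^ 3 =
      (((k:ℝ)+1)*((k:ℝ)+2)*((k:ℝ)+3) - 3*x*((m:ℝ)+1)*((k:ℝ)+1)*((k:ℝ)+2)
        + 3*x^2*((m:ℝ)+1)*((m:ℝ)+2)*((k:ℝ)+1) - x^3*((m:ℝ)+1)*((m:ℝ)+2)*((m:ℝ)+3))
      / (((m:ℝ)+1)*((m:ℝ)+2)*((m:ℝ)+3)*((m:ℝ)+4)) := by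
  have hpt : ∀ t : ℝ, bask (m+5) k t * (t - x) ^ 3 =
      ((Nat.choose (m+k+4) k : ℝ)) * (t^(k+3)/(1+t)^((k+3)+m+2))
        - (3*x*(Nat.choose (m+k+4) k : ℝ)) * (t^(k+2)/(1+t)^((k+2)+(m+1)+2))
        + (3*x^2*(Nat.choose (m+k+4) k : ℝ)) * (t^(k+1)/(1+t)^((k+1)+(m+2)+2))
        - (x^3*(Nat.choose (m+k+4) k : ℝ)) * (t^k/(1+t)^(k+(m+3)+2)) := by
    intro t
    unfold bask
    rw [show m+5+k-1 = m+k+4 by omega, show m+5+k = k+(m+3)+2 by omega,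
      show (k+3)+m+2 = k+(m+3)+2 by omega, show (k+2)+(m+1)+2 = k+(m+3)+2 by omega,
      show (k+1)+(m+2)+2 = k+(m+3)+2 by omega]
    ring
  simp only [hpt]
  have i3 : Integrable (fun t : ℝ => (Nat.choose (m+k+4) k : ℝ) * (t^(k+3)/(1+t)^((k+3)+m+2))) (volume.restrict (Set.Ioi 0)) :=
    (intOn (k+3) ((k+3)+m+2) (by omega)).const_mul _
  have i2 : Integrable (fun t : ℝ => 3*x*(Nat.choose (m+k+4) k : ℝ) * (t^(k+2)/(1+t)^((k+2)+(m+1)+2))) (volume.restrict (Set.Ioi 0)) :=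
    (intOn (k+2) ((k+2)+(m+1)+2) (by omega)).const_mul _
  have i1 : Integrable (fun t : ℝ => 3*x^2*(Nat.choose (m+k+4) k : ℝ) * (t^(k+1)/(1+t)^((k+1)+(m+2)+2))) (volume.restrict (Set.Ioi 0)) :=
    (intOn (k+1) ((k+1)+(m+2)+2) (by omega)).const_mul _
  have i0 : Integrable (fun t : ℝ => x^3*(Nat.choose (m+k+4) k : ℝ) * (t^k/(1+t)^(k+(m+3)+2))) (volume.restrict (Set.Ioi 0)) :=
    (intOn k (k+(m+3)+2) (by omega)).const_mul _
  have iA : Integrable (fun t : ℝ => (fun t : ℝ => (Nat.choose (m+k+4) k : ℝ) * (t^(k+3)/(1+t)^((k+3)+m+2))) t - (fun t : ℝ => 3*x*(Nat.choose (m+k+4) k : ℝ) * (t^(k+2)/(1+t)^((k+2)+(m+1)+2))) t) (volume.restrict (Set.Ioi 0)) := i3.sub i2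
  have iB : Integrable (fun t : ℝ => (fun t : ℝ => (Nat.choose (m+k+4) k : ℝ) * (t^(k+3)/(1+t)^((k+3)+m+2))) t - (fun t : ℝ => 3*x*(Nat.choose (m+k+4) k : ℝ) * (t^(k+2)/(1+t)^((k+2)+(m+1)+2))) t + (fun t : ℝ => 3*x^2*(Nat.choose (m+k+4) k : ℝ) * (t^(k+1)/(1+t)^((k+1)+(m+2)+2))) t) (volume.restrict (Set.Ioi 0)) := iA.add i1
  rw [integral_sub iB i0, integral_add iA i1, integral_sub i3 i2,
    integral_const_mul, integral_const_mul, integral_const_mul, integral_const_mul,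
    Jval (k+3) m, Jval (k+2) (m+1), Jval (k+1) (m+2), Jval k (m+3)]
  rw [Nat.cast_choose ℝ (show k ≤ m+k+4 by omega), show m+k+4-k = m+4 by omega]
  rw [show k+3+m+1 = m+k+4 by omega, show k+2+(m+1)+1 = m+k+4 by omega,
    show k+1+(m+2)+1 = m+k+4 by omega, show k+(m+3)+1 = m+k+4 by omega]
  have e3 : ((k+3).factorial:ℝ) = ((k:ℝ)+3)*((k:ℝ)+2)*((k:ℝ)+1)*k.factorial := by
    rw [show k+3 = (k+2)+1 by omega, Nat.factorial_succ, show k+2 = (k+1)+1 by omega,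
      Nat.factorial_succ, Nat.factorial_succ]
    push_cast; ring
  have e2 : ((k+2).factorial:ℝ) = ((k:ℝ)+2)*((k:ℝ)+1)*k.factorial := by
    rw [show k+2 = (k+1)+1 by omega, Nat.factorial_succ, Nat.factorial_succ]
    push_cast; ring
  have e1 : ((k+1).factorial:ℝ) = ((k:ℝ)+1)*k.factorial := by
    rw [Nat.factorial_succ]; push_cast; ring
  have f1 : ((m+1).factorial:ℝ) = ((m:ℝ)+1)*m.factorial := by
    rw [Nat.factorial_succ]; push_cast; ring
  have f2 : ((m+2).factorial:ℝ) = ((m:ℝ)+2)*((m:ℝ)+1)*m.factorial := by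
    rw [show m+2 = (m+1)+1 by omega, Nat.factorial_succ]; push_cast [f1]; ring
  have f3 : ((m+3).factorial:ℝ) = ((m:ℝ)+3)*((m:ℝ)+2)*((m:ℝ)+1)*m.factorial := by
    rw [show m+3 = (m+2)+1 by omega, Nat.factorial_succ]; push_cast [f2]; ring
  have f4 : ((m+4).factorial:ℝ) = ((m:ℝ)+4)*((m:ℝ)+3)*((m:ℝ)+2)*((m:ℝ)+1)*m.factorial := by
    rw [show m+4 = (m+3)+1 by omega, Nat.factorial_succ]; push_cast [f3]; ring
  rw [e3, e2, e1, f1, f2, f3, f4]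
  have hk0 : (k.factorial:ℝ) ≠ 0 := by positivity
  have hm0 : (m.factorial:ℝ) ≠ 0 := by positivity
  have hmk0 : ((m+k+4).factorial:ℝ) ≠ 0 := by positivity
  field_simp

lemma hs_basis {x : ℝ} (hx : 0 ≤ x) (j : ℕ) :
    HasSum (fun k : ℕ => ((k + j).choose j : ℝ) * (x / (1 + x)) ^ k) ((1 + x) ^ (j + 1)) := by
  have h1 : (0:ℝ) < 1 + x := by linarith
  have hy : ‖x / (1 + x)‖ < 1 := by
    rw [Real.norm_eq_abs, abs_of_nonneg (by positivity), div_lt_one h1]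
    linarith
  have H := hasSum_choose_mul_geometric_of_norm_lt_one (𝕜 := ℝ) j hy
  have hv : 1 / ((1 : ℝ) - x / (1 + x)) ^ (j + 1) = (1 + x) ^ (j + 1) := by
    rw [show (1:ℝ) - x / (1 + x) = 1 / (1 + x) by field_simp; ring]
    simp [div_pow]
  rwa [hv] at H

lemma choose_step (M k : ℕ) :
    (((k + M + 1).choose (M + 1)) : ℝ) * ((M:ℝ) + 1) = ((k + M).choose M : ℝ) * ((k:ℝ) + M + 1) := by
  have h := Nat.add_one_mul_choose_eq (k + M) M
  have h2 := congrArg (Nat.cast : ℕ → ℝ) h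
  push_cast at h2
  linarith [h2]

lemma hs1 {x : ℝ} (hx : 0 ≤ x) (M : ℕ) :
    HasSum (fun k : ℕ => ((k + M).choose M : ℝ) * ((k:ℝ) + M + 1) * (x / (1 + x)) ^ k)
      (((M:ℝ) + 1) * (1 + x) ^ (M + 2)) := by
  have H := (hs_basis hx (M + 1)).mul_left ((M:ℝ) + 1)
  have heq : (fun k : ℕ => ((M:ℝ) + 1) * (((k + (M + 1)).choose (M + 1) : ℝ) * (x / (1 + x)) ^ k))
      = fun k : ℕ => ((k + M).choose M : ℝ) * ((k:ℝ) + M + 1) * (x / (1 + x)) ^ k := by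
    funext k
    rw [show k + (M + 1) = k + M + 1 by omega, ← mul_assoc, mul_comm ((M:ℝ)+1), choose_step]
  rwa [heq, show M + 1 + 1 = M + 2 by omega] at H

lemma hs2 {x : ℝ} (hx : 0 ≤ x) (M : ℕ) :
    HasSum (fun k : ℕ => ((k + M).choose M : ℝ) * (((k:ℝ) + M + 1) * ((k:ℝ) + M + 2)) * (x / (1 + x)) ^ k)
      (((M:ℝ) + 1) * ((M:ℝ) + 2) * (1 + x) ^ (M + 3)) := by
  have H := (hs1 hx (M + 1)).mul_left ((M:ℝ) + 1)
  convert H using 1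
  · rfl
  · funext k
    rw [show k + (M + 1) = k + M + 1 by omega]
    have h := choose_step M k
    push_cast
    linear_combination (-((k:ℝ) + M + 2) * (x / (1 + x)) ^ k) * h
  · rw [show M + 1 + 2 = M + 3 by omega]
    push_cast
    ring

lemma hs3 {x : ℝ} (hx : 0 ≤ x) (M : ℕ) :
    HasSum (fun k : ℕ => ((k + M).choose M : ℝ)
        * (((k:ℝ) + M + 1) * ((k:ℝ) + M + 2) * ((k:ℝ) + M + 3)) * (x / (1 + x)) ^ k)
      (((M:ℝ) + 1) * ((M:ℝ) + 2) * ((M:ℝ) + 3) * (1 + x) ^ (M + 4)) := by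
  have H := (hs2 hx (M + 1)).mul_left ((M:ℝ) + 1)
  convert H using 1
  · rfl
  · funext k
    rw [show k + (M + 1) = k + M + 1 by omega]
    have h := choose_step M k
    push_cast
    linear_combination (-((k:ℝ) + M + 2) * ((k:ℝ) + M + 3) * (x / (1 + x)) ^ k) * h
  · rw [show M + 1 + 3 = M + 4 by omega]
    push_cast
    ring

lemma hasSum_cubic {x : ℝ} (hx : 0 ≤ x) (M : ℕ) (a b c d : ℝ) :
    HasSum (fun k : ℕ => ((k + M).choose M : ℝ)
        * (a + b * (k:ℝ) + c * (k:ℝ) ^ 2 + d * (k:ℝ) ^ 3) * (x / (1 + x)) ^ k)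
      ((a - b * ((M:ℝ)+1) + c * ((M:ℝ)+1) ^ 2 - d * ((M:ℝ)+1) ^ 3) * (1 + x) ^ (M + 1)
        + (b - c * (2 * ((M:ℝ)+1) + 1) + d * (3 * ((M:ℝ)+1) ^ 2 + 3 * ((M:ℝ)+1) + 1))
            * (((M:ℝ) + 1) * (1 + x) ^ (M + 2))
        + (c - 3 * d * (((M:ℝ)+1) + 1)) * (((M:ℝ) + 1) * ((M:ℝ) + 2) * (1 + x) ^ (M + 3))
        + d * (((M:ℝ) + 1) * ((M:ℝ) + 2) * ((M:ℝ) + 3) * (1 + x) ^ (M + 4))) := by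
  have H := (((hs_basis hx M).mul_left (a - b * ((M:ℝ)+1) + c * ((M:ℝ)+1) ^ 2 - d * ((M:ℝ)+1) ^ 3)).add
      ((hs1 hx M).mul_left (b - c * (2 * ((M:ℝ)+1) + 1) + d * (3 * ((M:ℝ)+1) ^ 2 + 3 * ((M:ℝ)+1) + 1)))).add
      (((hs2 hx M).mul_left (c - 3 * d * (((M:ℝ)+1) + 1))).add ((hs3 hx M).mul_left d))
  have heq : ∀ k : ℕ,
      (a - b * ((M:ℝ)+1) + c * ((M:ℝ)+1) ^ 2 - d * ((M:ℝ)+1) ^ 3) * (((k + M).choose M : ℝ) * (x / (1 + x)) ^ k)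
      + (b - c * (2 * ((M:ℝ)+1) + 1) + d * (3 * ((M:ℝ)+1) ^ 2 + 3 * ((M:ℝ)+1) + 1))
          * (((k + M).choose M : ℝ) * ((k:ℝ) + M + 1) * (x / (1 + x)) ^ k)
      + ((c - 3 * d * (((M:ℝ)+1) + 1)) * (((k + M).choose M : ℝ) * (((k:ℝ) + M + 1) * ((k:ℝ) + M + 2)) * (x / (1 + x)) ^ k)
        + d * (((k + M).choose M : ℝ) * (((k:ℝ) + M + 1) * ((k:ℝ) + M + 2) * ((k:ℝ) + M + 3)) * (x / (1 + x)) ^ k))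
      = ((k + M).choose M : ℝ) * (a + b * (k:ℝ) + c * (k:ℝ) ^ 2 + d * (k:ℝ) ^ 3) * (x / (1 + x)) ^ k := by
    intro k; ring
  have hfe : (fun k : ℕ =>
      (a - b * ((M:ℝ)+1) + c * ((M:ℝ)+1) ^ 2 - d * ((M:ℝ)+1) ^ 3) * (((k + M).choose M : ℝ) * (x / (1 + x)) ^ k)
      + (b - c * (2 * ((M:ℝ)+1) + 1) + d * (3 * ((M:ℝ)+1) ^ 2 + 3 * ((M:ℝ)+1) + 1))
          * (((k + M).choose M : ℝ) * ((k:ℝ) + M + 1) * (x / (1 + x)) ^ k)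
      + ((c - 3 * d * (((M:ℝ)+1) + 1)) * (((k + M).choose M : ℝ) * (((k:ℝ) + M + 1) * ((k:ℝ) + M + 2)) * (x / (1 + x)) ^ k)
        + d * (((k + M).choose M : ℝ) * (((k:ℝ) + M + 1) * ((k:ℝ) + M + 2) * ((k:ℝ) + M + 3)) * (x / (1 + x)) ^ k)))
      = fun k : ℕ => ((k + M).choose M : ℝ) * (a + b * (k:ℝ) + c * (k:ℝ) ^ 2 + d * (k:ℝ) ^ 3) * (x / (1 + x)) ^ k :=
    funext heq
  rw [hfe] at H
  convert H using 1
  · rfl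
  ring


noncomputable def Eint (m : ℕ) (x : ℝ) (k : ℕ) : ℝ :=
  (((k:ℝ)+1)*((k:ℝ)+2)*((k:ℝ)+3) - 3*x*((m:ℝ)+1)*((k:ℝ)+1)*((k:ℝ)+2)
      + 3*x^2*((m:ℝ)+1)*((m:ℝ)+2)*((k:ℝ)+1) - x^3*((m:ℝ)+1)*((m:ℝ)+2)*((m:ℝ)+3))
    / (((m:ℝ)+1)*((m:ℝ)+2)*((m:ℝ)+3)*((m:ℝ)+4))

lemma hasSum_congr {f g : ℕ → ℝ} {a : ℝ} (h : HasSum f a) (he : ∀ k, g k = f k) :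
    HasSum g a := by rw [funext he]; exact h

lemma bask_eq (m k : ℕ) {x : ℝ} (hx : 0 ≤ x) :
    bask (m+7) k x = ((k + (m+6)).choose (m+6) : ℝ) * (x/(1+x))^k / (1+x)^(m+7) := by
  have h1x : (0:ℝ) < 1 + x := by linarith
  have hcs : (m+6+k).choose k = (k+(m+6)).choose (m+6) := by
    rw [show k+(m+6) = m+6+k by omega, ← Nat.choose_symm (show k ≤ m+6+k by omega),
      show m+6+k-k = m+6 by omega]
  unfold bask
  rw [show m+7+k-1 = m+6+k by omega, hcs, show m+7+k = (m+7)+k from rfl, pow_add, div_pow]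
  generalize ((1:ℝ)+x)^(m+7) = z
  ring

lemma hasSum_main (x : ℝ) (hx : 0 ≤ x) (m s : ℕ) :
    HasSum (fun k : ℕ => bask (m+7) k x * Eint m x (k+s))
      ((((m:ℝ)+1)*((m:ℝ)+2)*((m:ℝ)+3)*((m:ℝ)+4))⁻¹ *
        (((((s:ℝ)+1)*((s:ℝ)+2)*((s:ℝ)+3) - (3*x*((m:ℝ)+1))*((s:ℝ)+1)*((s:ℝ)+2) + (3*x^2*((m:ℝ)+1)*((m:ℝ)+2))*((s:ℝ)+1) - x^3*((m:ℝ)+1)*((m:ℝ)+2)*((m:ℝ)+3)) - ((3*(s:ℝ)^2+12*(s:ℝ)+11) - (3*x*((m:ℝ)+1))*(2*(s:ℝ)+3) + (3*x^2*((m:ℝ)+1)*((m:ℝ)+2)))*((m:ℝ)+7) + ((3*(s:ℝ)+6) - (3*x*((m:ℝ)+1)))*((m:ℝ)+7)^2 - ((m:ℝ)+7)^3)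
          + (((3*(s:ℝ)^2+12*(s:ℝ)+11) - (3*x*((m:ℝ)+1))*(2*(s:ℝ)+3) + (3*x^2*((m:ℝ)+1)*((m:ℝ)+2))) - ((3*(s:ℝ)+6) - (3*x*((m:ℝ)+1)))*(2*((m:ℝ)+7)+1) + (3*((m:ℝ)+7)^2+3*((m:ℝ)+7)+1)) * (((m:ℝ)+7) * (1+x))
          + (((3*(s:ℝ)+6) - (3*x*((m:ℝ)+1))) - 3*(((m:ℝ)+7)+1)) * (((m:ℝ)+7)*(((m:ℝ)+7)+1) * (1+x)^2)
          + (((m:ℝ)+7)*(((m:ℝ)+7)+1)*(((m:ℝ)+7)+2) * (1+x)^3))) := by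
  have h1x : (0:ℝ) < 1 + x := by linarith
  have H := (hasSum_cubic hx (m+6) (((s:ℝ)+1)*((s:ℝ)+2)*((s:ℝ)+3) - (3*x*((m:ℝ)+1))*((s:ℝ)+1)*((s:ℝ)+2) + (3*x^2*((m:ℝ)+1)*((m:ℝ)+2))*((s:ℝ)+1) - x^3*((m:ℝ)+1)*((m:ℝ)+2)*((m:ℝ)+3)) ((3*(s:ℝ)^2+12*(s:ℝ)+11) - (3*x*((m:ℝ)+1))*(2*(s:ℝ)+3) + (3*x^2*((m:ℝ)+1)*((m:ℝ)+2))) ((3*(s:ℝ)+6) - (3*x*((m:ℝ)+1))) 1).mul_left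
    (((1+x)^(m+7) * (((m:ℝ)+1)*((m:ℝ)+2)*((m:ℝ)+3)*((m:ℝ)+4)))⁻¹)
  convert H using 1
  · rfl
  · funext k
    rw [bask_eq m k hx]
    simp only [Eint]
    push_cast
    generalize ((1:ℝ)+x)^(m+7) = z
    generalize (((m:ℝ)+1)*((m:ℝ)+2)*((m:ℝ)+3)*((m:ℝ)+4)) = D
    ring
  · have p8 : ((1:ℝ)+x)^(m+8) = (1+x)^(m+7) * (1+x) := by
      rw [show m+8 = (m+7)+1 from by omega, pow_succ]
    have p9 : ((1:ℝ)+x)^(m+9) = (1+x)^(m+7) * (1+x)^2 := by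
      rw [show m+9 = (m+7)+2 from by omega, pow_add]
    have p10 : ((1:ℝ)+x)^(m+10) = (1+x)^(m+7) * (1+x)^3 := by
      rw [show m+10 = (m+7)+3 from by omega, pow_add]
    rw [show m+6+1 = m+7 from by omega, show m+6+2 = m+8 from by omega,
      show m+6+3 = m+9 from by omega, show m+6+4 = m+10 from by omega, p8, p9, p10]
    have hz : ((1:ℝ)+x)^(m+7) ≠ 0 := by positivity
    generalize hzz : ((1:ℝ)+x)^(m+7) = z at hz ⊢
    have c1 : ((m:ℝ)+1) ≠ 0 := by positivity
    have c2 : ((m:ℝ)+2) ≠ 0 := by positivity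
    have c3 : ((m:ℝ)+3) ≠ 0 := by positivity
    have c4 : ((m:ℝ)+4) ≠ 0 := by positivity
    field_simp
    push_cast
    ring

lemma integral_E' (m k : ℕ) (x : ℝ) :
    ∫ t in Set.Ioi (0:ℝ), bask (m+5) k t * (t - x) ^ 3 = Eint m x k := by
  rw [integral_E]; rfl

end Aux

theorem V2_central_moment_three (n : ℕ) (hn : 5 ≤ n) (x : ℝ) (hx : 0 ≤ x) :
    V2 n (fun t => (t - x) ^ 3) x =
      (1 / (((n : ℝ) - 2) * ((n : ℝ) - 3) * ((n : ℝ) - 4))) *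
        ((n : ℝ) * (-12 * x - 36 * x ^ 2 - 24 * x ^ 3)
          - 21 - 150 * x - 324 * x ^ 2 - 216 * x ^ 3) := by
  obtain ⟨m, rfl⟩ : ∃ m, n = m + 5 := ⟨n - 5, by omega⟩
  have h1x : (0:ℝ) < 1 + x := by linarith
  have step1 : V2 (m+5) (fun t => (t - x)^3) x
      = (((m+5:ℕ):ℝ) - 1) * ∑' k : ℕ, p2 (m+5) k x * Eint m x k := by
    simp only [V2]
    congr 1
    refine tsum_congr fun k => ?_
    congr 1
    rw [integral_E m k x]
    rfl
  have H0 := hasSum_main x hx m 0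
  have H1 := hasSum_main x hx m 1
  have H2 := hasSum_main x hx m 2
  have Hv1 : HasSum (fun n : ℕ =>
      (if n + 1 = 0 then (0:ℝ) else bask (m+7) (n+1-1) x) * Eint m x (n+1)) _ :=
    hasSum_congr H1 (fun n => by rw [if_neg (Nat.succ_ne_zero n), Nat.add_sub_cancel])
  have Hv := (hasSum_nat_add_iff
    (f := fun k : ℕ => (if k = 0 then (0:ℝ) else bask (m+7) (k-1) x) * Eint m x k) 1).mp Hv1
  rw [Finset.sum_range_one,
    show (if (0:ℕ) = 0 then (0:ℝ) else bask (m+7) (0-1) x) = 0 from if_pos rfl,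
    zero_mul, add_zero] at Hv
  have Hw1 : HasSum (fun n : ℕ =>
      (if n + 2 < 2 then (0:ℝ) else bask (m+7) (n+2-2) x) * Eint m x (n+2)) _ :=
    hasSum_congr H2 (fun n => by rw [if_neg (by omega), Nat.add_sub_cancel])
  have Hw := (hasSum_nat_add_iff
    (f := fun k : ℕ => (if k < 2 then (0:ℝ) else bask (m+7) (k-2) x) * Eint m x k) 2).mp Hw1
  rw [Finset.sum_range_succ, Finset.sum_range_one,
    show (if (0:ℕ) < 2 then (0:ℝ) else bask (m+7) (0-2) x) = 0 from if_pos (by omega),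
    show (if (1:ℕ) < 2 then (0:ℝ) else bask (m+7) (1-2) x) = 0 from if_pos (by omega),
    zero_mul, zero_mul, zero_add, add_zero] at Hw
  have Htot : HasSum (fun k : ℕ => p2 (m+5) k x * Eint m x k) _ :=
    hasSum_congr ((H0.mul_left ((3:ℝ)/2 + 2*x - ((m:ℝ)+5)*x*(1+x))).add
      ((Hv.mul_left (2*((m:ℝ)+5)*x*(1+x))).add
       (Hw.mul_left (-(1/2) - 2*x - ((m:ℝ)+5)*x*(1+x)))))
      (fun k => by
        simp only [p2, show m+5+2 = m+7 from by omega, Nat.add_zero]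
        push_cast
        ring)
  rw [step1, Htot.tsum_eq]
  have c1 : ((m:ℝ)+1) ≠ 0 := by positivity
  have c2 : ((m:ℝ)+2) ≠ 0 := by positivity
  have c3 : ((m:ℝ)+3) ≠ 0 := by positivity
  have c4 : ((m:ℝ)+4) ≠ 0 := by positivity
  push_cast
  rw [show ((m:ℝ)+5-2) = ((m:ℝ)+3) from by ring, show ((m:ℝ)+5-3) = ((m:ℝ)+2) from by ring,
    show ((m:ℝ)+5-4) = ((m:ℝ)+1) from by ring]
  field_simp
  ring
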